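/- Let P be an m×m positive definite Hermitian complex matrix and let H be an m×m Hermitian complex matrix with tr(H) = 0. Then tr(H²P)/tr(P) − (tr(HP))²/(tr P)² ≥ ‖H‖_F² / (tr(P)·tr(P⁻¹)), where all the traces appearing are real numbers (tr(H²P) and tr(HP) are real because H and P are Hermitian), and ‖H‖_F² = tr(H²) is the squared Frobenius norm of H. -/

import Mathlib

open Matrix
open scoped ComplexOrder

lemma trace_conjTranspose_mul_self_re {m : ℕ} (A : Matrix (Fin m) (Fin m) ℂ) :
    (Matrix.trace (Aᴴ * A)).re = ∑ j, ∑ i, ‖A i j‖ ^ 2 := by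
  simp only [Matrix.trace, Matrix.mul_apply, Matrix.conjTranspose_apply, Matrix.diag,
    Complex.re_sum, Complex.sq_norm, Complex.normSq_apply, Complex.mul_re,
    Complex.conj_re, Complex.conj_im, Complex.star_def]
  simp [sq]

lemma trace_conjTranspose_mul_self_re_nonneg {m : ℕ} (A : Matrix (Fin m) (Fin m) ℂ) :
    0 ≤ (Matrix.trace (Aᴴ * A)).re := by
  rw [trace_conjTranspose_mul_self_re]
  positivity

lemma sum_cs {m : ℕ} (f g : Fin m → ℂ) :
    ‖∑ k, f k * g k‖ ^ 2 ≤ (∑ k, ‖f k‖ ^ 2) * (∑ k, ‖g k‖ ^ 2) := by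
  calc ‖∑ k, f k * g k‖ ^ 2 ≤ (∑ k, ‖f k‖ * ‖g k‖) ^ 2 := by
        apply pow_le_pow_left₀ (norm_nonneg _)
        exact (norm_sum_le _ _).trans (le_of_eq (by simp [norm_mul]))
    _ ≤ _ := Finset.sum_mul_sq_le_sq_mul_sq _ _ _

lemma trace_cs {m : ℕ} (A B : Matrix (Fin m) (Fin m) ℂ) :
    ((Matrix.trace (Aᴴ * B)).re) ^ 2 ≤
      (Matrix.trace (Aᴴ * A)).re * (Matrix.trace (Bᴴ * B)).re := by
  have habs : |(Matrix.trace (Aᴴ * B)).re| ≤ ∑ j, ∑ i, ‖A i j‖ * ‖B i j‖ := by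
    refine (Complex.abs_re_le_norm _).trans ?_
    rw [Matrix.trace]
    refine (norm_sum_le _ _).trans ?_
    refine Finset.sum_le_sum fun j _ => ?_
    simp only [Matrix.diag, Matrix.mul_apply, Matrix.conjTranspose_apply]
    refine (norm_sum_le _ _).trans ?_
    refine Finset.sum_le_sum fun i _ => ?_
    simp [norm_mul]
  have h2 : (∑ j, ∑ i, ‖A i j‖ * ‖B i j‖) ^ 2 ≤
      (∑ j, ∑ i, ‖A i j‖ ^ 2) * (∑ j, ∑ i, ‖B i j‖ ^ 2) := by
    have := Finset.sum_mul_sq_le_sq_mul_sq Finset.univ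
      (fun p : Fin m × Fin m => ‖A p.2 p.1‖) (fun p : Fin m × Fin m => ‖B p.2 p.1‖)
    simpa [Fintype.sum_prod_type] using this
  calc ((Matrix.trace (Aᴴ * B)).re) ^ 2 = |(Matrix.trace (Aᴴ * B)).re| ^ 2 := (sq_abs _).symm
    _ ≤ (∑ j, ∑ i, ‖A i j‖ * ‖B i j‖) ^ 2 := by
        apply pow_le_pow_left₀ (abs_nonneg _) habs
    _ ≤ _ := by
        rw [trace_conjTranspose_mul_self_re, trace_conjTranspose_mul_self_re]
        exact h2

open scoped MatrixOrder in
lemma trace_sandwich_le {m : ℕ} (Q H : Matrix (Fin m) (Fin m) ℂ) (hQ : Q.PosSemidef) :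
    (Matrix.trace (Hᴴ * Q * H)).re ≤ (Matrix.trace Q).re * (Matrix.trace (Hᴴ * H)).re := by
  obtain ⟨C, rfl⟩ : ∃ C : Matrix (Fin m) (Fin m) ℂ, Q = Cᴴ * C :=
    ⟨CFC.sqrt Q, by rw [(CFC.sqrt_nonneg Q).posSemidef.1.eq, CFC.sqrt_mul_sqrt_self Q hQ.nonneg]⟩
  have h1 : Hᴴ * (Cᴴ * C) * H = (C * H)ᴴ * (C * H) := by
    simp [Matrix.conjTranspose_mul, Matrix.mul_assoc]
  rw [h1, trace_conjTranspose_mul_self_re, trace_conjTranspose_mul_self_re,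
    trace_conjTranspose_mul_self_re]
  calc ∑ j, ∑ i, ‖(C * H) i j‖ ^ 2
      ≤ ∑ j, ∑ i, (∑ k, ‖C i k‖ ^ 2) * (∑ k, ‖H k j‖ ^ 2) := by
        refine Finset.sum_le_sum fun j _ => Finset.sum_le_sum fun i _ => ?_
        rw [Matrix.mul_apply]
        exact sum_cs _ _
    _ = (∑ k, ∑ i, ‖C i k‖ ^ 2) * (∑ j, ∑ k, ‖H k j‖ ^ 2) := by
        rw [Finset.sum_comm (s := Finset.univ) (t := Finset.univ)
          (f := fun k i => ‖C i k‖ ^ 2)]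
        simp only [← Finset.sum_mul, ← Finset.mul_sum]

lemma trace_re_pos {m : ℕ} (hm : 0 < m) (P : Matrix (Fin m) (Fin m) ℂ) (hP : P.PosDef) :
    0 < (Matrix.trace P).re := by
  rw [Matrix.trace, Complex.re_sum]
  refine Finset.sum_pos (fun i _ => ?_) ⟨⟨0, hm⟩, Finset.mem_univ _⟩
  have h := hP.re_dotProduct_pos (x := Pi.single i 1)
    (by simp [Function.ne_iff])
  have e : star (Pi.single i 1 : Fin m → ℂ) ⬝ᵥ (P *ᵥ Pi.single i 1) = P i i := by
    simp [dotProduct, Matrix.mulVec_single, Pi.single_apply]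
  rw [e] at h
  exact h

open scoped MatrixOrder in
set_option maxHeartbeats 1000000 in
theorem trace_quadratic_form_lower_bound (m : ℕ)
    (P H : Matrix (Fin m) (Fin m) ℂ)
    (hP : P.PosDef) (hH : H.IsHermitian) (htr : Matrix.trace H = 0) :
    (Matrix.trace (H * H)).re /
        ((Matrix.trace P).re * (Matrix.trace P⁻¹).re) ≤
      (Matrix.trace (H * H * P)).re / (Matrix.trace P).re -
        (Matrix.trace (H * P)).re ^ 2 / (Matrix.trace P).re ^ 2 := by
  rcases Nat.eq_zero_or_pos m with hm | hm
  · subst hm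
    have h : ∀ M : Matrix (Fin 0) (Fin 0) ℂ, Matrix.trace M = 0 := fun M => by
      simp [Matrix.trace]
    rw [h, h, h, h, h]
    norm_num
  have ht : (0:ℝ) < (Matrix.trace P).re := trace_re_pos hm P hP
  have hs : (0:ℝ) < (Matrix.trace P⁻¹).re := trace_re_pos hm P⁻¹ hP.inv
  set t : ℝ := (Matrix.trace P).re with ht_def
  set s : ℝ := (Matrix.trace P⁻¹).re with hs_def
  set a : ℝ := (Matrix.trace (H * P)).re with ha_def
  set c : ℝ := a / t with hc_def
  set E : ℝ := (Matrix.trace (H * H)).re with hE_def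
  set R : ℝ := (Matrix.trace (H * H * P)).re with hR_def
  set K : Matrix (Fin m) (Fin m) ℂ := H - (c : ℂ) • 1 with hK_def
  have hHe : Hᴴ = H := hH
  have hKherm : Kᴴ = K := by
    simp [hK_def, Matrix.conjTranspose_smul, hHe, Complex.star_def, Complex.conj_ofReal]
  -- square root of P
  set S : Matrix (Fin m) (Fin m) ℂ := CFC.sqrt P with hS_def
  have hSherm : Sᴴ = S := (CFC.sqrt_nonneg P).posSemidef.1
  have hSS : S * S = P := CFC.sqrt_mul_sqrt_self P hP.posSemidef.nonneg
  have hdetS : S.det ≠ 0 := by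
    intro h
    have : S.det * S.det = P.det := by rw [← Matrix.det_mul, hSS]
    rw [h, mul_zero] at this
    exact hP.det_pos.ne' this.symm
  have hSinv : S⁻¹ * S = 1 := Matrix.nonsing_inv_mul S (Ne.isUnit hdetS)
  have hSinvherm : (S⁻¹)ᴴ = S⁻¹ := by
    rw [Matrix.conjTranspose_nonsing_inv, hSherm]
  set A : Matrix (Fin m) (Fin m) ℂ := S⁻¹ * H with hA_def
  set B : Matrix (Fin m) (Fin m) ℂ := S * K with hB_def
  have hAH : Aᴴ = H * S⁻¹ := by rw [hA_def, Matrix.conjTranspose_mul, hSinvherm, hHe]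
  have hAB : Aᴴ * B = H * K := by
    rw [hAH, hB_def, Matrix.mul_assoc, ← Matrix.mul_assoc S⁻¹ S K, hSinv, Matrix.one_mul]
  have hAA : Aᴴ * A = H * (P⁻¹ * H) := by
    rw [hAH, hA_def, Matrix.mul_assoc, ← Matrix.mul_assoc S⁻¹ S⁻¹ H, ← Matrix.mul_inv_rev, hSS]
  have hBB : Bᴴ * B = K * (P * K) := by
    rw [hB_def, Matrix.conjTranspose_mul, hSherm, hKherm, Matrix.mul_assoc,
      ← Matrix.mul_assoc S S K, hSS]
  -- trace identities
  have htrHK : Matrix.trace (H * K) = Matrix.trace (H * H) := by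
    rw [hK_def, Matrix.mul_sub, Matrix.trace_sub, Matrix.mul_smul, Matrix.mul_one,
      Matrix.trace_smul, htr, smul_zero, sub_zero]
  have hV0 : 0 ≤ (Matrix.trace (Bᴴ * B)).re := trace_conjTranspose_mul_self_re_nonneg B
  set V : ℝ := (Matrix.trace (Bᴴ * B)).re with hV_def
  -- expand V
  have hexp : K * (P * K) =
      H * (P * H) - (c:ℂ) • (H * P) - (c:ℂ) • (P * H) + ((c:ℂ) * (c:ℂ)) • P := by
    rw [hK_def]
    simp only [Matrix.sub_mul, Matrix.mul_sub, Matrix.smul_mul, Matrix.mul_smul,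
      Matrix.one_mul, Matrix.mul_one, smul_smul]
    module
  have hVeq : V = R - 2 * c * a + c ^ 2 * t := by
    have h1 : Matrix.trace (H * (P * H)) = Matrix.trace (H * H * P) := by
      rw [← Matrix.mul_assoc, Matrix.trace_mul_cycle]
    have h2 : Matrix.trace (P * H) = Matrix.trace (H * P) := Matrix.trace_mul_comm P H
    rw [hV_def, hBB, hexp]
    simp only [Matrix.trace_sub, Matrix.trace_add, Matrix.trace_smul, h1, h2,
      smul_eq_mul, ← Complex.ofReal_mul, Complex.sub_re, Complex.add_re, Complex.re_ofReal_mul]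
    rw [hR_def, ha_def, ht_def]
    ring
  -- Cauchy–Schwarz
  have hCS := trace_cs A B
  rw [hAB, htrHK, hAA] at hCS
  -- sandwich bound
  have hsand : (Matrix.trace (H * (P⁻¹ * H))).re ≤ s * E := by
    have := trace_sandwich_le P⁻¹ H hP.inv.posSemidef
    rw [hHe, Matrix.mul_assoc] at this
    exact this
  have hE0 : 0 ≤ E := by
    have := trace_conjTranspose_mul_self_re_nonneg H
    rwa [hHe] at this
  have hsandnn : 0 ≤ (Matrix.trace (H * (P⁻¹ * H))).re := by
    have := trace_conjTranspose_mul_self_re_nonneg A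
    rwa [hAA] at this
  have hEle : E ≤ s * V := by
    rcases eq_or_lt_of_le hE0 with h | hEpos
    · rw [← h]; positivity
    · have : E ^ 2 ≤ (s * E) * V := le_trans hCS (by
        apply mul_le_mul_of_nonneg_right hsand hV0)
      nlinarith
  have hRHS : R / t - a ^ 2 / t ^ 2 = V / t := by
    rw [hVeq, hc_def]
    field_simp
    ring
  rw [hRHS]
  rw [div_le_div_iff₀ (by positivity) ht]
  nlinarith [mul_le_mul_of_nonneg_right hEle ht.le]
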